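/- The function f(ρ) = log₂(1 + (1-ρ)hP / ((1-ρ)σ_A² + σ_cov²)) is concave in ρ on the interval [0,1], where h, P, σ_A², σ_cov² are positive real constants. -/

import Mathlib

open Set Real

/-- log of a positive concave function is concave. -/
lemma log_comp_concaveOn {s : Set ℝ} {g : ℝ → ℝ} (hg : ConcaveOn ℝ s g)
    (hpos : ∀ x ∈ s, 0 < g x) : ConcaveOn ℝ s (fun x => Real.log (g x)) := by
  refine ⟨hg.1, fun x hx y hy a b ha hb hab => ?_⟩
  have h1 : a • Real.log (g x) + b • Real.log (g y) ≤ Real.log (a • g x + b • g y) :=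
    strictConcaveOn_log_Ioi.concaveOn.2 (hpos x hx) (hpos y hy) ha hb hab
  refine h1.trans (Real.log_le_log ?_ (hg.2 hx hy ha hb hab))
  have := hpos x hx; have := hpos y hy
  rcases ha.lt_or_eq with ha' | ha'
  · have : 0 < a • g x := mul_pos ha' (hpos x hx)
    have : 0 ≤ b • g y := mul_nonneg hb (hpos y hy).le
    linarith
  · have hb' : b = 1 := by linarith
    simp [← ha', hb', hpos y hy]

/-- The rate function `f(ρ) = log₂(1 + (1-ρ)hP / ((1-ρ)σ_A² + σ_cov²))` is concave
on `[0,1]` for positive constants `h, P, σ_A², σ_cov²`. -/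
theorem sps_rate_concave (h P sA scov : ℝ) (hh : 0 < h) (hP : 0 < P)
    (hsA : 0 < sA) (hscov : 0 < scov) :
    ConcaveOn ℝ (Set.Icc (0:ℝ) 1)
      (fun ρ : ℝ => Real.logb 2 (1 + (1 - ρ) * h * P / ((1 - ρ) * sA + scov))) := by
  set g : ℝ → ℝ := fun ρ => 1 + (1 - ρ) * h * P / ((1 - ρ) * sA + scov) with hgdef
  have hden : ∀ ρ ∈ Icc (0:ℝ) 1, 0 < (1 - ρ) * sA + scov := by
    intro ρ hρ
    have h1 : 0 ≤ 1 - ρ := by linarith [hρ.2]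
    have : 0 ≤ (1 - ρ) * sA := mul_nonneg h1 hsA.le
    linarith
  -- convexity of ρ ↦ ((1-ρ)*sA+scov)⁻¹ on Icc 0 1
  have hinv : ConvexOn ℝ (Icc (0:ℝ) 1) (fun ρ => ((1 - ρ) * sA + scov)⁻¹) := by
    have hz : ConvexOn ℝ (Ioi (0:ℝ)) (fun x : ℝ => x ^ (-1 : ℤ)) :=
      (strictConvexOn_zpow (by norm_num) (by norm_num)).convexOn
    have A : ℝ →ᵃ[ℝ] ℝ := AffineMap.lineMap (sA + scov) scov
    have hcomp := hz.comp_affineMap (AffineMap.lineMap (sA + scov) scov : ℝ →ᵃ[ℝ] ℝ)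
    have hsub : Icc (0:ℝ) 1 ⊆ (AffineMap.lineMap (sA + scov) scov : ℝ →ᵃ[ℝ] ℝ) ⁻¹' Ioi 0 := by
      intro ρ hρ
      simp only [mem_preimage, AffineMap.lineMap_apply, mem_Ioi]
      have := hden ρ hρ
      simp only [vsub_eq_sub, vadd_eq_add, smul_eq_mul]
      nlinarith
    refine (hcomp.subset hsub (convex_Icc 0 1)).congr fun ρ hρ => ?_
    have hd := (hden ρ hρ).ne'
    simp only [Function.comp_apply, AffineMap.lineMap_apply, vsub_eq_sub, vadd_eq_add,
      smul_eq_mul, zpow_neg_one]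
    ring_nf
  -- concavity of g
  have hgconc : ConcaveOn ℝ (Icc (0:ℝ) 1) g := by
    have hK : (0:ℝ) ≤ h * P * scov / sA := by positivity
    have h1 : ConvexOn ℝ (Icc (0:ℝ) 1)
        (fun ρ => (h * P * scov / sA) • ((1 - ρ) * sA + scov)⁻¹) := hinv.smul hK
    have h2 : ConcaveOn ℝ (Icc (0:ℝ) 1)
        (fun ρ => -((h * P * scov / sA) • ((1 - ρ) * sA + scov)⁻¹)) := h1.neg
    have h3 : ConcaveOn ℝ (Icc (0:ℝ) 1)
        (fun ρ => (1 + h * P / sA) + -((h * P * scov / sA) • ((1 - ρ) * sA + scov)⁻¹)) :=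
      (concaveOn_const _ (convex_Icc 0 1)).add h2
    refine h3.congr fun ρ hρ => ?_
    have hd := (hden ρ hρ).ne'
    simp only [hgdef, smul_eq_mul]
    field_simp
    have hd' : sA - sA * ρ + scov ≠ 0 := by intro e; apply hd; linarith
    have e : (sA - sA * ρ + scov)⁻¹ * (sA - sA * ρ + scov) = 1 := inv_mul_cancel₀ hd'
    linear_combination (-(h * P)) * e
  have hgpos : ∀ ρ ∈ Icc (0:ℝ) 1, 0 < g ρ := by
    intro ρ hρ
    have h1 : 0 ≤ 1 - ρ := by linarith [hρ.2]
    have hnum : 0 ≤ (1 - ρ) * h * P := by positivity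
    have := div_nonneg hnum (hden ρ hρ).le
    simp only [hgdef]; linarith
  have hlog : ConcaveOn ℝ (Icc (0:ℝ) 1) (fun ρ => Real.log (g ρ)) :=
    log_comp_concaveOn hgconc hgpos
  have hc : (0:ℝ) ≤ (Real.log 2)⁻¹ := by
    have : 0 < Real.log 2 := Real.log_pos (by norm_num)
    positivity
  refine (hlog.smul hc).congr fun ρ _ => ?_
  rw [Real.logb, div_eq_inv_mul]; rfl
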